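/- Let Ω = {ω_1, ..., ω_n} be an LF-inducing set, and for each positive integer M define 𝒜(M) = { ∏_{i=1}^n ω_i^{m_i} : m_1, ..., m_n nonnegative integers with ∑_{i=1}^n m_i = M }. If there exists a positive integer M such that 1 ∈ 𝒜(M), then neither the two-sided Mahavier dynamical system (I_{F_Ω}, σ_{F_Ω}) nor the one-sided Mahavier dynamical system (I^+_{F_Ω}, σ^+_{F_Ω}) has the shadowing property. -/

import Mathlib

open Set Filter Topology

/-- One-sided Mahavier product of a relation `F` on `X`. -/
def MahavierPlus {X : Type*} (F : Set (X × X)) : Set (ℕ → X) :=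
  {x | ∀ n : ℕ, (x n, x (n + 1)) ∈ F}

/-- Two-sided Mahavier product of a relation `F` on `X`. -/
def MahavierTwo {X : Type*} (F : Set (X × X)) : Set (ℤ → X) :=
  {x | ∀ n : ℤ, (x n, x (n + 1)) ∈ F}

/-- The shift map on the one-sided Mahavier product. -/
def shiftPlus {X : Type*} (F : Set (X × X)) (x : MahavierPlus F) : MahavierPlus F :=
  ⟨fun n => (x : ℕ → X) (n + 1), fun n => x.2 (n + 1)⟩

/-- The shift map on the two-sided Mahavier product. -/
def shiftTwo {X : Type*} (F : Set (X × X)) (x : MahavierTwo F) : MahavierTwo F :=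
  ⟨fun n => (x : ℤ → X) (n + 1), fun n => x.2 (n + 1)⟩

/-- The metric `D(x,y) = sup_{n ≥ 1} d(x_n, y_n)/2^n` on one-sided sequences
(coordinates are indexed from `0` here, so the weight is `2^(n+1)`). -/
noncomputable def DPlus {X : Type*} [PseudoMetricSpace X] (x y : ℕ → X) : ℝ :=
  ⨆ n : ℕ, dist (x n) (y n) / 2 ^ (n + 1)

/-- The metric `D(x,y) = sup_{n ∈ ℤ} d(x_n, y_n)/2^{|n|}` on two-sided sequences. -/
noncomputable def DTwo {X : Type*} [PseudoMetricSpace X] (x y : ℤ → X) : ℝ :=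
  ⨆ n : ℤ, dist (x n) (y n) / 2 ^ n.natAbs

/-- Topological transitivity. -/
def TopTransitive {Y : Type*} [TopologicalSpace Y] (f : Y → Y) : Prop :=
  ∀ U V : Set Y, IsOpen U → IsOpen V → U.Nonempty → V.Nonempty →
    ∃ n : ℕ, (f^[n] '' U ∩ V).Nonempty

/-- Topological mixing. -/
def TopMixing {Y : Type*} [TopologicalSpace Y] (f : Y → Y) : Prop :=
  ∀ U V : Set Y, IsOpen U → IsOpen V → U.Nonempty → V.Nonempty →
    ∃ n₀ : ℕ, ∀ n : ℕ, n₀ ≤ n → (f^[n] '' U ∩ V).Nonempty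

/-- The shadowing property for a map `f` with respect to a distance `dY`. -/
def ShadowingProp {Y : Type*} (dY : Y → Y → ℝ) (f : Y → Y) : Prop :=
  ∀ ε : ℝ, 0 < ε → ∃ δ : ℝ, 0 < δ ∧ ∀ x : ℕ → Y,
    (∀ k : ℕ, dY (f (x k)) (x (k + 1)) < δ) →
    ∃ y : Y, ∀ k : ℕ, dY (f^[k] y) (x k) < ε

/-- The specification property for a map `f` with respect to a distance `dY`. -/
def SpecProp {Y : Type*} (dY : Y → Y → ℝ) (f : Y → Y) : Prop :=
  ∀ ε : ℝ, 0 < ε → ∃ N : ℕ, 0 < N ∧ ∀ n : ℕ, 0 < n →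
    ∀ x : Fin n → Y, ∀ k l : Fin n → ℕ,
      (∀ i, k i ≤ l i) →
      (∀ i j : Fin n, (i : ℕ) + 1 = (j : ℕ) → l i + N ≤ k j) →
      ∃ y : Y, ∀ i : Fin n, ∀ m : ℕ, k i ≤ m → m ≤ l i →
        dY (f^[m] y) (f^[m] (x i)) ≤ ε

/-- The CR-specification property for the one-sided Mahavier product of `F`. -/
def CRSpec {X : Type*} [PseudoMetricSpace X] (F : Set (X × X)) : Prop :=
  ∀ ε : ℝ, 0 < ε → ∃ N : ℕ, 0 < N ∧ ∀ n : ℕ, 0 < n →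
    ∀ x : Fin n → MahavierPlus F, ∀ k l : Fin n → ℕ,
      (∀ i, k i ≤ l i) →
      (∀ i j : Fin n, (i : ℕ) + 1 = (j : ℕ) → l i + N ≤ k j) →
      ∃ y : MahavierPlus F, ∀ i : Fin n, ∀ m : ℕ, k i ≤ m → m ≤ l i →
        dist ((x i : ℕ → X) m) ((y : ℕ → X) m) ≤ ε

/-- The image of a set under a relation. -/
def relImage {X : Type*} (F : Set (X × X)) (A : Set X) : Set X :=
  {y | ∃ a ∈ A, (a, y) ∈ F}

/-- Composition of relations. -/
def relComp {X : Type*} (F G : Set (X × X)) : Set (X × X) :=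
  {p | ∃ z : X, (p.1, z) ∈ F ∧ (z, p.2) ∈ G}

/-- Iterated composition `F^n` of a relation with itself. -/
def relPow {X : Type*} (F : Set (X × X)) : ℕ → Set (X × X)
  | 0 => {p | p.1 = p.2}
  | n + 1 => relComp (relPow F n) F

/-- A finite set `Ω` of positive reals is LF-inducing if it has at least two elements,
all its elements are positive, and it contains elements `ω₁ < 1 < ω₂` that never
connect: `ω₁^k = ω₂^l` (for integers `k, l`) only when `k = l = 0`. -/
def LFInducing (Ω : Finset ℝ) : Prop :=
  2 ≤ Ω.card ∧ (∀ ω ∈ Ω, 0 < ω) ∧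
  ∃ ω₁ ∈ Ω, ∃ ω₂ ∈ Ω, ω₁ < 1 ∧ 1 < ω₂ ∧
    ∀ k l : ℤ, ω₁ ^ k = ω₂ ^ l → k = 0 ∧ l = 0

/-- The relation `F_Ω = {(x,y) ∈ [0,1]² : y = ω·x for some ω ∈ Ω}`. -/
def FOmega (Ω : Finset ℝ) : Set (ℝ × ℝ) :=
  {p | p.1 ∈ Set.Icc (0 : ℝ) 1 ∧ p.2 ∈ Set.Icc (0 : ℝ) 1 ∧ ∃ ω ∈ Ω, p.2 = ω * p.1}

/-! ### Auxiliary material for Statement 19 -/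

/-- Prefix products of a list, taken cyclically. -/
noncomputable def qfun (l : List ℝ) (a : ℕ) : ℝ := (l.take (a % l.length)).prod

lemma qfun_mod (l : List ℝ) (a : ℕ) : qfun l (a % l.length) = qfun l a := by
  simp [qfun, Nat.mod_mod_of_dvd a (dvd_refl l.length)]

lemma qfun_pos {l : List ℝ} (hl : ∀ x ∈ l, (0:ℝ) < x) (a : ℕ) : 0 < qfun l a :=
  List.prod_pos fun x hx => hl x (List.take_subset _ _ hx)

lemma qfun_mul (l : List ℝ) (j : ℕ) : qfun l (j * l.length) = 1 := by
  simp [qfun, Nat.mul_mod_left]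

lemma qfun_succ {l : List ℝ} (hp : l.prod = 1) (hne : l ≠ []) (a : ℕ) :
    ∃ ω, ω ∈ l ∧ qfun l (a + 1) = ω * qfun l a := by
  have hM : 0 < l.length := List.length_pos_iff.mpr hne
  have h1 : a % l.length < l.length := Nat.mod_lt _ hM
  refine ⟨l[a % l.length], List.getElem_mem h1, ?_⟩
  have hts := List.prod_take_succ l (a % l.length) h1
  have hkey : (a + 1) % l.length = (a % l.length + 1) % l.length := by
    conv_lhs => rw [Nat.add_mod]
    conv_rhs => rw [Nat.add_mod, Nat.mod_mod_of_dvd a (dvd_refl l.length)]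
  rcases eq_or_lt_of_le (Nat.succ_le_of_lt h1) with h2 | h2
  · have hz : (a + 1) % l.length = 0 := by
      rw [hkey, show a % l.length + 1 = l.length from h2, Nat.mod_self]
    have hfull : (List.take (a % l.length) l).prod * l[a % l.length] = 1 := by
      rw [← hts, show a % l.length + 1 = l.length from h2, List.take_length]
      exact hp
    rw [qfun, hz]
    simp only [List.take_zero, List.prod_nil]
    rw [qfun]
    rw [mul_comm] at hfull
    linarith [hfull]
  · have hz : (a + 1) % l.length = a % l.length + 1 := by
      rw [hkey, Nat.mod_eq_of_lt h2]
    rw [qfun, hz, hts, mul_comm]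
    rfl

lemma qfun_bound (l : List ℝ) : ∃ P : ℝ, 1 ≤ P ∧ ∀ a, qfun l a ≤ P := by
  have hnn : (0:ℝ) ≤ ∑ i ∈ Finset.range l.length, |qfun l i| :=
    Finset.sum_nonneg fun i _ => abs_nonneg _
  refine ⟨1 + ∑ i ∈ Finset.range l.length, |qfun l i|,
    le_add_of_nonneg_right hnn, fun a => ?_⟩
  rcases Nat.eq_zero_or_pos l.length with h | h
  · have hl : l = [] := List.length_eq_zero_iff.mp h
    have : qfun l a = 1 := by simp [qfun, hl]
    rw [this]; linarith
  · have hmem : a % l.length ∈ Finset.range l.length := Finset.mem_range.mpr (Nat.mod_lt _ h)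
    calc qfun l a = qfun l (a % l.length) := (qfun_mod l a).symm
      _ ≤ |qfun l (a % l.length)| := le_abs_self _
      _ ≤ ∑ i ∈ Finset.range l.length, |qfun l i| :=
          Finset.single_le_sum (f := fun i => |qfun l i|) (fun i _ => abs_nonneg _) hmem
      _ ≤ 1 + ∑ i ∈ Finset.range l.length, |qfun l i| := by linarith

/-- Cyclic prefix products indexed by `ℤ`. -/
noncomputable def qZfun (l : List ℝ) (n : ℤ) : ℝ := qfun l (n % (l.length : ℤ)).toNat

lemma qZfun_natCast (l : List ℝ) (k : ℕ) : qZfun l (k : ℤ) = qfun l k := by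
  unfold qZfun
  rcases Nat.eq_zero_or_pos l.length with h | h
  · simp [h]
  · have : ((k : ℤ) % (l.length : ℤ)).toNat = k % l.length := by
      rw [← Int.natCast_mod, Int.toNat_natCast]
    rw [this, qfun_mod]

lemma qZfun_succ {l : List ℝ} (hp : l.prod = 1) (hne : l ≠ []) (n : ℤ) :
    ∃ ω, ω ∈ l ∧ qZfun l (n + 1) = ω * qZfun l n := by
  have hM : 0 < l.length := List.length_pos_iff.mpr hne
  have hMz : (0:ℤ) < (l.length : ℤ) := by exact_mod_cast hM
  set a := (n % (l.length : ℤ)).toNat with ha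
  have h0 : (0:ℤ) ≤ n % (l.length : ℤ) := Int.emod_nonneg n hMz.ne'
  have ha' : (a : ℤ) = n % (l.length : ℤ) := Int.toNat_of_nonneg h0
  have key : ((n + 1) % (l.length : ℤ)).toNat = (a + 1) % l.length := by
    have e1 : (n + 1) % (l.length : ℤ) = ((a : ℤ) + 1) % (l.length : ℤ) := by
      conv_lhs => rw [Int.add_emod]
      conv_rhs => rw [Int.add_emod, ha', Int.emod_emod_of_dvd n (dvd_refl _)]
    have e2 : ((a : ℤ) + 1) % (l.length : ℤ) = (((a + 1) % l.length : ℕ) : ℤ) := by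
      rw [Int.natCast_mod]; push_cast; ring_nf
    rw [e1, e2, Int.toNat_natCast]
  obtain ⟨ω, hωl, hω⟩ := qfun_succ hp hne a
  refine ⟨ω, hωl, ?_⟩
  show qfun l ((n + 1) % (l.length : ℤ)).toNat = ω * qfun l a
  rw [key, qfun_mod, hω]

lemma qZfun_pos {l : List ℝ} (hl : ∀ x ∈ l, (0:ℝ) < x) (n : ℤ) : 0 < qZfun l n :=
  qfun_pos hl _

/-- The drifting base-point profile. -/
noncomputable def cfun (s η : ℝ) (k : ℕ) : ℝ := s / 4 + min ((k : ℝ) * η) (s / 2)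

lemma cfun_lb {s η : ℝ} (hs : 0 ≤ s) (hη : 0 ≤ η) (k : ℕ) : s / 4 ≤ cfun s η k := by
  have h1 : (0:ℝ) ≤ min ((k : ℝ) * η) (s / 2) := le_min (by positivity) (by positivity)
  unfold cfun; linarith

lemma cfun_ub (s η : ℝ) (k : ℕ) : cfun s η k ≤ s / 4 + s / 2 := by
  have := min_le_right ((k : ℝ) * η) (s / 2)
  unfold cfun; linarith

lemma cfun_mono {s η : ℝ} (hη : 0 ≤ η) {k k' : ℕ} (h : k ≤ k') :
    cfun s η k ≤ cfun s η k' := by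
  unfold cfun
  have : (k : ℝ) * η ≤ (k' : ℝ) * η := by
    have : (k:ℝ) ≤ (k':ℝ) := by exact_mod_cast h
    nlinarith
  exact add_le_add_right (min_le_min this le_rfl) _

lemma cfun_step {s η : ℝ} (hη : 0 ≤ η) (k d : ℕ) :
    cfun s η (k + d) ≤ cfun s η k + (d : ℝ) * η := by
  have hd : (0:ℝ) ≤ (d : ℝ) * η := by positivity
  unfold cfun
  rcases le_total ((k : ℝ) * η) (s / 2) with h | h
  · have e : ((k + d : ℕ) : ℝ) * η = (k : ℝ) * η + (d : ℝ) * η := by push_cast; ring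
    have : min (((k + d : ℕ) : ℝ) * η) (s / 2) ≤ (k : ℝ) * η + (d : ℝ) * η := by
      rw [e] at *; exact min_le_left _ _
    rw [min_eq_left h]; linarith
  · have : min (((k + d : ℕ) : ℝ) * η) (s / 2) ≤ s / 2 := min_le_right _ _
    rw [min_eq_right h]; linarith

/-- Products of consecutive multipliers along an orbit. -/
lemma steps_prod {Ω : Finset ℝ} {y : ℕ → ℝ} (hy : ∀ t, ∃ ω ∈ Ω, y (t + 1) = ω * y t)
    (t : ℕ) : ∀ n : ℕ, ∃ v : Fin n → ℝ, (∀ i, v i ∈ Ω) ∧ y (t + n) = (∏ i, v i) * y t := by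
  intro n
  induction n with
  | zero => exact ⟨fun i => i.elim0, fun i => i.elim0, by simp⟩
  | succ n ih =>
    obtain ⟨v, hv, hyv⟩ := ih
    obtain ⟨ω, hω, hstep⟩ := hy (t + n)
    refine ⟨Fin.snoc v ω, ?_, ?_⟩
    · intro i
      refine Fin.lastCases ?_ ?_ i
      · simpa using hω
      · intro j; simpa using hv j
    · rw [Fin.prod_snoc]
      have e : t + (n + 1) = (t + n) + 1 := by ring
      rw [e, hstep, hyv]; ring

/-- Core contradiction lemma: no orbit can track the drifting pseudo-orbit profile. -/
lemma stmt19core {Ω : Finset ℝ} {l : List ℝ} (hlne : l ≠ []) (hp : l.prod = 1)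
    {ρ ε η s : ℝ} (hρ : 1 < ρ)
    (hρmin : ∀ v : Fin l.length → ℝ, (∀ i, v i ∈ Ω) → 1 < ∏ i, v i → ρ ≤ ∏ i, v i)
    (hs : 0 < s)
    (hε1 : ε * (16 * (ρ + 1)) ≤ (ρ - 1) * s) (hε2 : 16 * ε ≤ s)
    (hη : 0 < η) (hη2 : (l.length : ℝ) * η * 16 ≤ (ρ - 1) * s)
    {y : ℕ → ℝ} (hy : ∀ t, ∃ ω ∈ Ω, y (t + 1) = ω * y t)
    (hclose : ∀ k, |y k - cfun s η k * qfun l k| < 2 * ε) : False := by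
  set M := l.length with hMdef
  have hM : 0 < M := List.length_pos_iff.mpr hlne
  have hεpos : 0 < ε := by
    have h := hclose 0
    have := abs_nonneg (y 0 - cfun s η 0 * qfun l 0)
    linarith
  have hcl : ∀ j : ℕ, |y (j * M) - cfun s η (j * M)| < 2 * ε := by
    intro j
    have h := hclose (j * M)
    rwa [qfun_mul l j, mul_one] at h
  have hdec : ∀ j : ℕ, y ((j + 1) * M) ≤ y (j * M) := by
    intro j
    obtain ⟨v, hv, hprod⟩ := steps_prod hy (j * M) M
    have hco : (j + 1) * M = j * M + M := by ring
    set r := ∏ i, v i with hr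
    have ha := abs_lt.mp (hcl j)
    have hb := abs_lt.mp (hcl (j + 1))
    have hclb : s / 4 ≤ cfun s η (j * M) := cfun_lb hs.le hη.le _
    have hcub : cfun s η ((j + 1) * M) ≤ cfun s η (j * M) + (M : ℝ) * η := by
      rw [hco]; exact cfun_step hη.le _ _
    have hy0 : 0 < y (j * M) := by linarith
    rcases le_or_gt r 1 with hr1 | hr1
    · rw [hco, hprod]; nlinarith
    · exfalso
      have hρr : ρ ≤ r := hρmin v hv hr1
      have hru : y ((j + 1) * M) < cfun s η (j * M) + (M : ℝ) * η + 2 * ε := by linarith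
      have hrl : ρ * (cfun s η (j * M) - 2 * ε) ≤ r * y (j * M) := by nlinarith
      rw [hco, hprod] at hru
      have hkey : ρ * (cfun s η (j * M) - 2 * ε) <
          cfun s η (j * M) + (M : ℝ) * η + 2 * ε := lt_of_le_of_lt hrl hru
      nlinarith [mul_le_mul_of_nonneg_left hclb (by linarith : (0:ℝ) ≤ ρ - 1),
        mul_pos (by linarith : (0:ℝ) < ρ - 1) hs]
  have hchain : ∀ j : ℕ, y (j * M) ≤ y (0 * M) := by
    intro j
    induction j with
    | zero => exact le_refl _
    | succ n ih => exact le_trans (hdec n) ih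
  set J : ℕ := ⌈s / (2 * η)⌉₊ with hJ
  have hJM : s / 2 ≤ ((J * M : ℕ) : ℝ) * η := by
    have h1 : s / (2 * η) ≤ (J : ℝ) := Nat.le_ceil _
    have h2 : (J : ℝ) ≤ ((J * M : ℕ) : ℝ) := by
      have : J ≤ J * M := Nat.le_mul_of_pos_right J hM
      exact_mod_cast this
    have h3 : s / (2 * η) * η ≤ ((J * M : ℕ) : ℝ) * η :=
      mul_le_mul_of_nonneg_right (le_trans h1 h2) hη.le
    have h4 : s / (2 * η) * η = s / 2 := by field_simp
    linarith
  have hcJ : cfun s η (J * M) = s / 4 + s / 2 := by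
    unfold cfun; rw [min_eq_right hJM]
  have hc0 : cfun s η 0 = s / 4 := by
    unfold cfun
    rw [show ((0:ℕ):ℝ) * η = 0 by simp, min_eq_left (by positivity)]
    ring
  have e1 := abs_lt.mp (hcl 0)
  have e2 := abs_lt.mp (hcl J)
  have e3 := hchain J
  rw [zero_mul] at e1 e3
  rw [hc0] at e1
  rw [hcJ] at e2
  linarith

/-- Coordinates of iterates of the one-sided shift. -/
lemma shiftPlus_iterate {X : Type*} (F : Set (X × X)) (y : MahavierPlus F) (k : ℕ) :
    ∀ n : ℕ, (((shiftPlus F)^[k] y : MahavierPlus F) : ℕ → X) n = (y : ℕ → X) (n + k) := by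
  induction k with
  | zero => intro n; simp
  | succ k ih =>
    intro n
    rw [Function.iterate_succ_apply']
    show (((shiftPlus F)^[k] y : MahavierPlus F) : ℕ → X) (n + 1) = (y : ℕ → X) (n + (k + 1))
    rw [ih (n + 1), show n + 1 + k = n + (k + 1) by omega]

/-- Coordinates of iterates of the two-sided shift. -/
lemma shiftTwo_iterate {X : Type*} (F : Set (X × X)) (y : MahavierTwo F) (k : ℕ) :
    ∀ n : ℤ, (((shiftTwo F)^[k] y : MahavierTwo F) : ℤ → X) n = (y : ℤ → X) (n + k) := by
  induction k with
  | zero => intro n; simp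
  | succ k ih =>
    intro n
    rw [Function.iterate_succ_apply']
    show (((shiftTwo F)^[k] y : MahavierTwo F) : ℤ → X) (n + 1) = (y : ℤ → X) (n + (k + 1 : ℕ))
    rw [ih (n + 1), show n + 1 + (k:ℤ) = n + ((k:ℕ)+1:ℕ) by push_cast; ring]

lemma dplus_coord_le {x y : ℕ → ℝ} (hx : ∀ n, x n ∈ Set.Icc (0:ℝ) 1)
    (hy : ∀ n, y n ∈ Set.Icc (0:ℝ) 1) (n : ℕ) :
    dist (x n) (y n) / 2 ^ (n + 1) ≤ DPlus x y := by
  apply le_ciSup (f := fun m => dist (x m) (y m) / 2 ^ (m + 1)) ?_ n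
  refine ⟨1, ?_⟩
  rintro _ ⟨m, rfl⟩
  have h1 : dist (x m) (y m) ≤ 1 := by
    rw [Real.dist_eq]
    have := hx m; have := hy m
    rw [abs_le]
    constructor <;> [skip; skip] <;> simp only [Set.mem_Icc] at * <;> linarith
  have h2 : (1:ℝ) ≤ 2 ^ (m + 1) := one_le_pow₀ (by norm_num)
  calc dist (x m) (y m) / 2 ^ (m + 1) ≤ 1 / 1 := by
        apply div_le_div₀ (by norm_num) h1 (by norm_num) h2
    _ = 1 := by norm_num

lemma dtwo_coord_le {x y : ℤ → ℝ} (hx : ∀ n, x n ∈ Set.Icc (0:ℝ) 1)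
    (hy : ∀ n, y n ∈ Set.Icc (0:ℝ) 1) (n : ℤ) :
    dist (x n) (y n) / 2 ^ n.natAbs ≤ DTwo x y := by
  apply le_ciSup (f := fun m : ℤ => dist (x m) (y m) / 2 ^ m.natAbs) ?_ n
  refine ⟨1, ?_⟩
  rintro _ ⟨m, rfl⟩
  have h1 : dist (x m) (y m) ≤ 1 := by
    rw [Real.dist_eq]
    have := hx m; have := hy m
    rw [abs_le]
    constructor <;> [skip; skip] <;> simp only [Set.mem_Icc] at * <;> linarith
  have h2 : (1:ℝ) ≤ 2 ^ m.natAbs := one_le_pow₀ (by norm_num)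
  calc dist (x m) (y m) / 2 ^ m.natAbs ≤ 1 / 1 := by
        apply div_le_div₀ (by norm_num) h1 (by norm_num) h2
    _ = 1 := by norm_num

set_option maxHeartbeats 1600000 in
/-- Let `Ω` be an LF-inducing set. If there is a positive integer `M`
such that `1 = ∏_{ω ∈ Ω} ω^{m_ω}` for some nonnegative integers `m_ω` summing to `M`,
then neither the two-sided nor the one-sided Mahavier system of `F_Ω` has the shadowing
property. -/
theorem stmt19 (Ω : Finset ℝ) (hΩ : LFInducing Ω)
    (h : ∃ M : ℕ, 0 < M ∧
      ∃ m : ℝ → ℕ, (∑ ω ∈ Ω, m ω) = M ∧ (∏ ω ∈ Ω, ω ^ m ω) = 1) :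
    ¬ ShadowingProp (fun a b : MahavierTwo (FOmega Ω) => DTwo (a : ℤ → ℝ) (b : ℤ → ℝ))
        (shiftTwo (FOmega Ω)) ∧
    ¬ ShadowingProp (fun a b : MahavierPlus (FOmega Ω) => DPlus (a : ℕ → ℝ) (b : ℕ → ℝ))
        (shiftPlus (FOmega Ω)) := by
  obtain ⟨hcard, hpos, ω₁, hω₁Ω, ω₂, hω₂Ω, hω₁lt, hω₂gt, -⟩ := hΩ
  obtain ⟨M₀, hM₀, m, hsum, hprodm⟩ := h
  -- build the cyclic word
  set t : Multiset ℝ := ∑ ω ∈ Ω, Multiset.replicate (m ω) ω with ht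
  have htcard : Multiset.card t = M₀ := by
    rw [ht, Multiset.card_sum Ω (fun ω => Multiset.replicate (m ω) ω)]
    simpa [Multiset.card_replicate] using hsum
  have htprod : t.prod = 1 := by
    rw [ht, Multiset.prod_sum]
    simpa [Multiset.prod_replicate] using hprodm
  set l : List ℝ := t.toList with hldef
  have hlprod : l.prod = 1 := by rw [hldef, Multiset.prod_toList]; exact htprod
  have hllen : l.length = M₀ := by rw [hldef, Multiset.length_toList]; exact htcard
  have hlne : l ≠ [] := by
    intro hnil
    rw [hnil] at hllen
    simp at hllen
    omega
  have hmemΩ : ∀ x ∈ l, x ∈ Ω := by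
    intro x hx
    have hxt : x ∈ t := Multiset.mem_toList.mp hx
    rw [ht] at hxt
    obtain ⟨ω, hω, hxr⟩ := Multiset.mem_sum.mp hxt
    rw [Multiset.eq_of_mem_replicate hxr]; exact hω
  have hlpos : ∀ x ∈ l, (0:ℝ) < x := fun x hx => hpos x (hmemΩ x hx)
  have hMpos : 0 < l.length := List.length_pos_iff.mpr hlne
  -- the minimal >1 product of words of length M
  set T : Finset ℝ := ((Fintype.piFinset fun _ : Fin l.length => Ω).image
      fun v => ∏ i, v i).filter (fun r => 1 < r) with hTdef
  have hTne : T.Nonempty := by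
    refine ⟨ω₂ ^ l.length, ?_⟩
    rw [hTdef, Finset.mem_filter]
    refine ⟨Finset.mem_image.mpr ⟨fun _ => ω₂, Fintype.mem_piFinset.mpr fun _ => hω₂Ω,
        by simp [Finset.prod_const]⟩, one_lt_pow₀ hω₂gt hMpos.ne'⟩
  set ρ : ℝ := T.min' hTne with hρdef
  have hρ : 1 < ρ := by
    have := Finset.mem_filter.mp (T.min'_mem hTne)
    exact this.2
  have hρmin : ∀ v : Fin l.length → ℝ, (∀ i, v i ∈ Ω) → 1 < ∏ i, v i → ρ ≤ ∏ i, v i := by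
    intro v hv h1
    exact T.min'_le _ (Finset.mem_filter.mpr
      ⟨Finset.mem_image.mpr ⟨v, Fintype.mem_piFinset.mpr hv, rfl⟩, h1⟩)
  -- scale and precision
  obtain ⟨P, hP1, hPq⟩ := qfun_bound l
  have hP0 : (0:ℝ) < P := lt_of_lt_of_le one_pos hP1
  set s : ℝ := 1 / P with hsdef
  have hs : 0 < s := by positivity
  have hsP : s * P = 1 := by rw [hsdef]; field_simp
  have hρ1 : (0:ℝ) < ρ - 1 := by linarith
  set ε : ℝ := min ((ρ - 1) * s / (16 * (ρ + 1))) (s / 16) with hεdef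
  have hε0 : 0 < ε :=
    lt_min (div_pos (mul_pos hρ1 hs) (by linarith)) (by positivity)
  have hε1 : ε * (16 * (ρ + 1)) ≤ (ρ - 1) * s := by
    have h1 : ε ≤ (ρ - 1) * s / (16 * (ρ + 1)) := min_le_left _ _
    have h2 : (0:ℝ) < 16 * (ρ + 1) := by linarith
    calc ε * (16 * (ρ + 1)) ≤ ((ρ - 1) * s / (16 * (ρ + 1))) * (16 * (ρ + 1)) :=
          mul_le_mul_of_nonneg_right h1 h2.le
      _ = (ρ - 1) * s := div_mul_cancel₀ _ h2.ne'
  have hε2 : 16 * ε ≤ s := by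
    have := min_le_right ((ρ - 1) * s / (16 * (ρ + 1))) (s / 16)
    linarith
  -- values of the pseudo-orbits stay in [0,1]
  have hcq_mem : ∀ (η : ℝ), 0 < η → ∀ (k : ℕ) (q : ℝ), 0 < q → q ≤ P →
      cfun s η k * q ∈ Set.Icc (0:ℝ) 1 := by
    intro η hη k q hq0 hqP
    constructor
    · exact mul_nonneg (le_trans (by positivity) (cfun_lb hs.le hη.le k)) hq0.le
    · have h1 : cfun s η k ≤ s / 4 + s / 2 := cfun_ub s η k
      have h2 : cfun s η k * q ≤ (s / 4 + s / 2) * P := by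
        apply mul_le_mul h1 hqP hq0.le (by positivity)
      have h3 : (s / 4 + s / 2) * P = 3 / 4 := by
        have e : (s / 4 + s / 2) * P = (3 / 4) * (s * P) := by ring
        rw [e, hsP]; norm_num
      linarith
  constructor
  -- ===================== two-sided system =====================
  · intro hsh
    obtain ⟨δ, hδ, hshad⟩ := hsh ε hε0
    set η : ℝ := min (δ / (2 * P)) ((ρ - 1) * s / (16 * l.length + 16)) with hηdef
    have hden : (0:ℝ) < 16 * l.length + 16 := by positivity
    have hη0 : 0 < η := lt_min (by positivity) (div_pos (mul_pos hρ1 hs) hden)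
    have hη2 : (l.length : ℝ) * η * 16 ≤ (ρ - 1) * s := by
      have h1 : η ≤ (ρ - 1) * s / (16 * l.length + 16) := min_le_right _ _
      have h2 : η * (16 * l.length + 16) ≤ (ρ - 1) * s := by
        calc η * (16 * l.length + 16)
            ≤ ((ρ - 1) * s / (16 * l.length + 16)) * (16 * l.length + 16) :=
              mul_le_mul_of_nonneg_right h1 hden.le
          _ = (ρ - 1) * s := div_mul_cancel₀ _ hden.ne'
      nlinarith [hη0.le]
    have hηP : η * P ≤ δ / 2 := by
      have h1 : η ≤ δ / (2 * P) := min_le_left _ _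
      have h2 : η * (2 * P) ≤ δ := (le_div_iff₀ (by positivity)).mp h1
      nlinarith
    have hXmem : ∀ k : ℕ, (fun n : ℤ => cfun s η k * qZfun l ((k : ℤ) + n)) ∈
        MahavierTwo (FOmega Ω) := by
      intro k n
      obtain ⟨ω, hωl, hωq⟩ := qZfun_succ hlprod hlne ((k : ℤ) + n)
      refine ⟨hcq_mem η hη0 k _ (qZfun_pos hlpos _) (hPq _),
        hcq_mem η hη0 k _ (qZfun_pos hlpos _) (hPq _), ω, hmemΩ ω hωl, ?_⟩
      show cfun s η k * qZfun l ((k : ℤ) + (n + 1)) =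
          ω * (cfun s η k * qZfun l ((k : ℤ) + n))
      rw [show (k : ℤ) + (n + 1) = ((k : ℤ) + n) + 1 by ring, hωq]
      ring
    set X : ℕ → MahavierTwo (FOmega Ω) :=
      fun k => ⟨fun n : ℤ => cfun s η k * qZfun l ((k : ℤ) + n), hXmem k⟩ with hXdef
    have hXps : ∀ k : ℕ,
        DTwo ((shiftTwo (FOmega Ω) (X k) : MahavierTwo (FOmega Ω)) : ℤ → ℝ)
          ((X (k + 1) : MahavierTwo (FOmega Ω)) : ℤ → ℝ) < δ := by
      intro k
      have hub : ∀ n : ℤ,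
          dist (((shiftTwo (FOmega Ω) (X k) : MahavierTwo (FOmega Ω)) : ℤ → ℝ) n)
            (((X (k + 1) : MahavierTwo (FOmega Ω)) : ℤ → ℝ) n) / 2 ^ n.natAbs ≤ δ / 2 := by
        intro n
        show dist (cfun s η k * qZfun l ((k : ℤ) + (n + 1)))
            (cfun s η (k + 1) * qZfun l (((k + 1 : ℕ) : ℤ) + n)) / 2 ^ n.natAbs ≤ δ / 2
        rw [show (k : ℤ) + (n + 1) = ((k + 1 : ℕ) : ℤ) + n by push_cast; ring]
        set q : ℝ := qZfun l (((k + 1 : ℕ) : ℤ) + n) with hqdef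
        have hq0 : 0 < q := qZfun_pos hlpos _
        have hqP : q ≤ P := hPq _
        have hc1 : cfun s η k ≤ cfun s η (k + 1) := cfun_mono hη0.le (Nat.le_succ k)
        have hc2 : cfun s η (k + 1) ≤ cfun s η k + 1 * η := by
          simpa using cfun_step hη0.le k 1
        have h3 : dist (cfun s η k * q) (cfun s η (k + 1) * q) ≤ η * P := by
          rw [Real.dist_eq, abs_sub_comm,
            show cfun s η (k + 1) * q - cfun s η k * q
              = (cfun s η (k + 1) - cfun s η k) * q by ring,
            abs_of_nonneg (by nlinarith)]
          nlinarith
        have h4 : (1:ℝ) ≤ 2 ^ n.natAbs := one_le_pow₀ (by norm_num)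
        calc dist (cfun s η k * q) (cfun s η (k + 1) * q) / 2 ^ n.natAbs
            ≤ (η * P) / 1 := div_le_div₀ (by positivity) h3 (by norm_num) h4
          _ = η * P := by norm_num
          _ ≤ δ / 2 := hηP
      show DTwo _ _ < δ
      unfold DTwo
      exact lt_of_le_of_lt (Real.iSup_le hub (by positivity)) (by linarith)
    obtain ⟨y, hy⟩ := hshad X hXps
    have hyIcc : ∀ (k : ℕ) (n : ℤ),
        (((shiftTwo (FOmega Ω))^[k] y : MahavierTwo (FOmega Ω)) : ℤ → ℝ) n ∈
          Set.Icc (0:ℝ) 1 := fun k n => (((shiftTwo (FOmega Ω))^[k] y).2 n).1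
    set yr : ℕ → ℝ := fun t => (y : ℤ → ℝ) (t : ℤ) with hyrdef
    have hyc : ∀ k : ℕ, |yr k - cfun s η k * qfun l k| < 2 * ε := by
      intro k
      have hXIcc : ∀ n : ℤ, ((X k : MahavierTwo (FOmega Ω)) : ℤ → ℝ) n ∈ Set.Icc (0:ℝ) 1 :=
        fun n => ((X k).2 n).1
      have h2 := dtwo_coord_le (hyIcc k) hXIcc 0
      have h3 := lt_of_le_of_lt h2 (hy k)
      rw [shiftTwo_iterate] at h3
      have e2 : ((X k : MahavierTwo (FOmega Ω)) : ℤ → ℝ) 0 = cfun s η k * qfun l k := by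
        show cfun s η k * qZfun l ((k : ℤ) + 0) = _
        rw [add_zero, qZfun_natCast]
      rw [e2, zero_add, Real.dist_eq] at h3
      simp only [Int.natAbs_zero, pow_zero, div_one] at h3
      have : |yr k - cfun s η k * qfun l k| < ε := h3
      linarith
    have hstep : ∀ tt : ℕ, ∃ ω ∈ Ω, yr (tt + 1) = ω * yr tt := by
      intro tt
      obtain ⟨ω, hω, he⟩ := (y.2 (tt : ℤ)).2.2
      refine ⟨ω, hω, ?_⟩
      show (y : ℤ → ℝ) ((tt + 1 : ℕ) : ℤ) = ω * (y : ℤ → ℝ) (tt : ℤ)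
      rw [show ((tt + 1 : ℕ) : ℤ) = (tt : ℤ) + 1 by push_cast; ring]
      exact he
    exact stmt19core hlne hlprod hρ hρmin hs hε1 hε2 hη0 hη2 hstep hyc
  -- ===================== one-sided system =====================
  · intro hsh
    obtain ⟨δ, hδ, hshad⟩ := hsh ε hε0
    set η : ℝ := min (δ / (2 * P)) ((ρ - 1) * s / (16 * l.length + 16)) with hηdef
    have hden : (0:ℝ) < 16 * l.length + 16 := by positivity
    have hη0 : 0 < η := lt_min (by positivity) (div_pos (mul_pos hρ1 hs) hden)
    have hη2 : (l.length : ℝ) * η * 16 ≤ (ρ - 1) * s := by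
      have h1 : η ≤ (ρ - 1) * s / (16 * l.length + 16) := min_le_right _ _
      have h2 : η * (16 * l.length + 16) ≤ (ρ - 1) * s := by
        calc η * (16 * l.length + 16)
            ≤ ((ρ - 1) * s / (16 * l.length + 16)) * (16 * l.length + 16) :=
              mul_le_mul_of_nonneg_right h1 hden.le
          _ = (ρ - 1) * s := div_mul_cancel₀ _ hden.ne'
      nlinarith [hη0.le]
    have hηP : η * P ≤ δ / 2 := by
      have h1 : η ≤ δ / (2 * P) := min_le_left _ _
      have h2 : η * (2 * P) ≤ δ := (le_div_iff₀ (by positivity)).mp h1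
      nlinarith
    have hXmem : ∀ k : ℕ, (fun n : ℕ => cfun s η k * qfun l (k + n)) ∈
        MahavierPlus (FOmega Ω) := by
      intro k n
      obtain ⟨ω, hωl, hωq⟩ := qfun_succ hlprod hlne (k + n)
      refine ⟨hcq_mem η hη0 k _ (qfun_pos hlpos _) (hPq _),
        hcq_mem η hη0 k _ (qfun_pos hlpos _) (hPq _), ω, hmemΩ ω hωl, ?_⟩
      show cfun s η k * qfun l (k + (n + 1)) = ω * (cfun s η k * qfun l (k + n))
      rw [show k + (n + 1) = (k + n) + 1 from rfl, hωq]
      ring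
    set X : ℕ → MahavierPlus (FOmega Ω) :=
      fun k => ⟨fun n : ℕ => cfun s η k * qfun l (k + n), hXmem k⟩ with hXdef
    have hXps : ∀ k : ℕ,
        DPlus ((shiftPlus (FOmega Ω) (X k) : MahavierPlus (FOmega Ω)) : ℕ → ℝ)
          ((X (k + 1) : MahavierPlus (FOmega Ω)) : ℕ → ℝ) < δ := by
      intro k
      have hub : ∀ n : ℕ,
          dist (((shiftPlus (FOmega Ω) (X k) : MahavierPlus (FOmega Ω)) : ℕ → ℝ) n)
            (((X (k + 1) : MahavierPlus (FOmega Ω)) : ℕ → ℝ) n) / 2 ^ (n + 1) ≤ δ / 2 := by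
        intro n
        show dist (cfun s η k * qfun l (k + (n + 1)))
            (cfun s η (k + 1) * qfun l ((k + 1) + n)) / 2 ^ (n + 1) ≤ δ / 2
        rw [show k + (n + 1) = (k + 1) + n by omega]
        set q : ℝ := qfun l ((k + 1) + n) with hqdef
        have hq0 : 0 < q := qfun_pos hlpos _
        have hqP : q ≤ P := hPq _
        have hc1 : cfun s η k ≤ cfun s η (k + 1) := cfun_mono hη0.le (Nat.le_succ k)
        have hc2 : cfun s η (k + 1) ≤ cfun s η k + 1 * η := by
          simpa using cfun_step hη0.le k 1
        have h3 : dist (cfun s η k * q) (cfun s η (k + 1) * q) ≤ η * P := by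
          rw [Real.dist_eq, abs_sub_comm,
            show cfun s η (k + 1) * q - cfun s η k * q
              = (cfun s η (k + 1) - cfun s η k) * q by ring,
            abs_of_nonneg (by nlinarith)]
          nlinarith
        have h4 : (1:ℝ) ≤ 2 ^ (n + 1) := one_le_pow₀ (by norm_num)
        calc dist (cfun s η k * q) (cfun s η (k + 1) * q) / 2 ^ (n + 1)
            ≤ (η * P) / 1 := div_le_div₀ (by positivity) h3 (by norm_num) h4
          _ = η * P := by norm_num
          _ ≤ δ / 2 := hηP
      show DPlus _ _ < δ
      unfold DPlus
      exact lt_of_le_of_lt (Real.iSup_le hub (by positivity)) (by linarith)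
    obtain ⟨y, hy⟩ := hshad X hXps
    have hyIcc : ∀ (k : ℕ) (n : ℕ),
        (((shiftPlus (FOmega Ω))^[k] y : MahavierPlus (FOmega Ω)) : ℕ → ℝ) n ∈
          Set.Icc (0:ℝ) 1 := fun k n => (((shiftPlus (FOmega Ω))^[k] y).2 n).1
    have hyc : ∀ k : ℕ, |(y : ℕ → ℝ) k - cfun s η k * qfun l k| < 2 * ε := by
      intro k
      have hXIcc : ∀ n : ℕ, ((X k : MahavierPlus (FOmega Ω)) : ℕ → ℝ) n ∈ Set.Icc (0:ℝ) 1 :=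
        fun n => ((X k).2 n).1
      have h2 := dplus_coord_le (hyIcc k) hXIcc 0
      have h3 := lt_of_le_of_lt h2 (hy k)
      rw [shiftPlus_iterate] at h3
      have e2 : ((X k : MahavierPlus (FOmega Ω)) : ℕ → ℝ) 0 = cfun s η k * qfun l k := by
        show cfun s η k * qfun l (k + 0) = _
        rw [Nat.add_zero]
      rw [e2, Nat.zero_add, Real.dist_eq] at h3
      norm_num at h3
      linarith
    have hstep : ∀ tt : ℕ, ∃ ω ∈ Ω, (y : ℕ → ℝ) (tt + 1) = ω * (y : ℕ → ℝ) tt :=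
      fun tt => (y.2 tt).2.2
    exact stmt19core hlne hlprod hρ hρmin hs hε1 hε2 hη0 hη2 hstep hyc
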